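/- Main theorem (two-sided corollary): Let X_1, ..., X_n be independent random variables with X_i taking values in 𝒳_i, X = (X_1, ..., X_n), and let 𝒴 ⊆ 𝒳 be a measurable subset with p = 1 − P[X ∈ 𝒴] < 1. Let f : 𝒳 → ℝ be measurable with c-bounded differences on 𝒴, i.e. |f(x) − f(y)| ≤ d_c(x, y) for all x, y ∈ 𝒴, and let m = E[f(X) | X ∈ 𝒴]. Then for all ε ≥ 0, P[|f(X) − m| ≥ ε] ≤ 2·(p + exp(−2((ε − p·c̄)⁺)² / Σ_{i=1}^n c_i²)), where c̄ = Σ_{i=1}^n c_i and a⁺ = max(a, 0). -/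

import Mathlib

open MeasureTheory ProbabilityTheory
open scoped Classical

open Real Function ENNReal

set_option maxHeartbeats 1000000
set_option linter.unusedSectionVars false

private lemma mcd_D_pos {p : ℝ} (hp0 : 0 ≤ p) (hp1 : p ≤ 1) (u : ℝ) :
    0 < 1 - p + p * exp u := by
  rcases eq_or_lt_of_le hp0 with h | h
  · simp [← h]
  · have := exp_pos u
    nlinarith

private lemma mcd_key {p : ℝ} (hp0 : 0 ≤ p) (hp1 : p ≤ 1) (u : ℝ) :
    1 - p + p * exp u ≤ exp (p * u + u ^ 2 / 8) := by
  set D : ℝ → ℝ := fun u => 1 - p + p * exp u with hD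
  have hDpos : ∀ u, 0 < D u := fun u => mcd_D_pos hp0 hp1 u
  have hDd : ∀ u, HasDerivAt D (p * exp u) u := by
    intro u
    exact ((hasDerivAt_exp u).const_mul p).const_add (1 - p)
  set F : ℝ → ℝ := fun u => p * u + u ^ 2 / 8 - log (D u) with hF
  set G : ℝ → ℝ := fun u => p + u / 4 - p * exp u / D u with hG
  have hFd : ∀ u, HasDerivAt F (G u) u := by
    intro u
    have h1 : HasDerivAt (fun u : ℝ => p * u + u ^ 2 / 8) (p + u / 4) u := by
      have := ((hasDerivAt_pow 2 u).div_const 8).const_add 0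
      have h2 : HasDerivAt (fun u : ℝ => p * u) p u := by
        simpa using (hasDerivAt_id u).const_mul p
      have h10 := h2.add ((hasDerivAt_pow 2 u).div_const 8)
      have e : p + ((2:ℕ):ℝ) * u ^ (2 - 1) / 8 = p + u / 4 := by norm_num; ring
      rw [← e]
      exact h10
    have h3 : HasDerivAt (fun u => log (D u)) (p * exp u / D u) u :=
      (hDd u).log (hDpos u).ne'
    exact h1.sub h3
  have hGd : ∀ u, HasDerivAt G (1 / 4 - p * exp u * (1 - p) / (D u) ^ 2) u := by
    intro u
    have h4 : HasDerivAt (fun u => p * exp u / D u)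
        ((p * exp u * D u - p * exp u * (p * exp u)) / (D u) ^ 2) u :=
      ((hasDerivAt_exp u).const_mul p).div (hDd u) (hDpos u).ne'
    have h5 : HasDerivAt (fun u : ℝ => p + u / 4) (1 / 4) u := by
      simpa using ((hasDerivAt_id u).div_const 4).const_add p
    have h6 := h5.sub h4
    have : (p * exp u * D u - p * exp u * (p * exp u)) / (D u) ^ 2
        = p * exp u * (1 - p) / (D u) ^ 2 := by
      congr 1; simp only [hD]; ring
    rwa [this] at h6
  have hGmono : Monotone G := by
    apply monotone_of_deriv_nonneg (fun u => (hGd u).differentiableAt)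
    intro u
    rw [(hGd u).deriv]
    have h7 : 4 * (p * exp u * (1 - p)) ≤ (D u) ^ 2 := by
      have := sq_nonneg ((1 - p) - p * exp u)
      simp only [hD]; nlinarith
    have h8 := sq_nonneg (D u)
    have h9 := (hDpos u)
    rw [sub_nonneg, div_le_iff₀ (by positivity)]
    set X := p * rexp u * (1 - p) with hX
    set Y := D u ^ 2 with hY
    linarith
  have hG0 : G 0 = 0 := by simp [hG, hD]
  have hF0 : F 0 = 0 := by simp [hF, hD]
  have hFnonneg : ∀ u, 0 ≤ F u := by
    intro u
    rcases le_total 0 u with h | h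
    · have : MonotoneOn F (Set.Ici (0:ℝ)) := by
        apply monotoneOn_of_deriv_nonneg (convex_Ici 0)
          (fun x _ => ((hFd x).differentiableAt).continuousAt.continuousWithinAt)
          (fun x _ => ((hFd x).differentiableAt).differentiableWithinAt)
        intro x hx
        rw [(hFd x).deriv]
        rw [interior_Ici] at hx
        have := hGmono (le_of_lt hx)
        rwa [hG0] at this
      have := this (Set.self_mem_Ici) (Set.mem_Ici.2 h) h
      rwa [hF0] at this
    · have : AntitoneOn F (Set.Iic (0:ℝ)) := by
        apply antitoneOn_of_deriv_nonpos (convex_Iic 0)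
          (fun x _ => ((hFd x).differentiableAt).continuousAt.continuousWithinAt)
          (fun x _ => ((hFd x).differentiableAt).differentiableWithinAt)
        intro x hx
        rw [(hFd x).deriv]
        rw [interior_Iic] at hx
        have := hGmono (le_of_lt hx)
        rw [hG0] at this
        linarith
      have := this (Set.mem_Iic.2 h) (Set.self_mem_Iic) h
      rwa [hF0] at this
  have := hFnonneg u
  have hlog : log (D u) ≤ p * u + u ^ 2 / 8 := by simp only [hF] at this; linarith
  calc D u = exp (log (D u)) := (exp_log (hDpos u)).symm
    _ ≤ exp (p * u + u ^ 2 / 8) := exp_le_exp.2 hlog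


section Hoeffding
variable {α : Type*} [MeasurableSpace α] (ν : MeasureTheory.Measure α) [IsProbabilityMeasure ν]


/-- Hoeffding's lemma, base version on `[0, C]`. -/
private lemma mcd_hoeffding0 {φ : α → ℝ} (hφ : Measurable φ) {C t : ℝ} (hC : 0 ≤ C)
    (hb : ∀ᵐ a ∂ν, φ a ∈ Set.Icc 0 C) :
    ∫ a, exp (t * φ a) ∂ν ≤ exp (t * ∫ a, φ a ∂ν + t ^ 2 * C ^ 2 / 8) := by
  have hφint : Integrable φ ν := by
    refine Integrable.mono' (integrable_const C) hφ.aestronglyMeasurable ?_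
    filter_upwards [hb] with a ha
    rw [Real.norm_eq_abs, abs_le]
    exact ⟨by linarith [ha.1], ha.2⟩
  have hmean0 : 0 ≤ ∫ a, φ a ∂ν := integral_nonneg_of_ae (by filter_upwards [hb] with a ha using ha.1)
  have hmeanC : ∫ a, φ a ∂ν ≤ C := by
    calc ∫ a, φ a ∂ν ≤ ∫ _, C ∂ν := by
          apply integral_mono_ae hφint (integrable_const C)
          filter_upwards [hb] with a ha using ha.2
      _ = C := by simp
  rcases eq_or_lt_of_le hC with hC0 | hCpos
  · -- C = 0
    have hφ0 : φ =ᵐ[ν] fun _ => (0:ℝ) := by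
      filter_upwards [hb] with a ha
      rw [← hC0] at ha
      exact le_antisymm ha.2 ha.1
    have h1 : ∫ a, exp (t * φ a) ∂ν = 1 := by
      rw [integral_congr_ae (g := fun _ => (1:ℝ)) (by filter_upwards [hφ0] with a ha; simp [ha])]
      simp
    have h2 : ∫ a, φ a ∂ν = 0 := by
      rw [integral_congr_ae hφ0]; simp
    rw [h1, h2, ← hC0]
    simp
  · -- C > 0
    set m := ∫ a, φ a ∂ν with hm
    have hintexp : Integrable (fun a => exp (t * φ a)) ν := by
      refine Integrable.mono' (integrable_const (exp (|t| * C))) ?_ ?_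
      · exact (measurable_exp.comp (hφ.const_mul t)).aestronglyMeasurable
      · filter_upwards [hb] with a ha
        rw [Real.norm_eq_abs, abs_of_pos (exp_pos _), exp_le_exp]
        calc t * φ a ≤ |t * φ a| := le_abs_self _
          _ = |t| * |φ a| := abs_mul _ _
          _ ≤ |t| * C := by
              apply mul_le_mul_of_nonneg_left _ (abs_nonneg t)
              rw [abs_of_nonneg ha.1]; exact ha.2
    have hpt : ∀ᵐ a ∂ν, exp (t * φ a) ≤ (1 - φ a / C) + (φ a / C) * exp (t * C) := by
      filter_upwards [hb] with a ha
      have hθ0 : 0 ≤ φ a / C := div_nonneg ha.1 hC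
      have hθ1 : φ a / C ≤ 1 := (div_le_one hCpos).2 ha.2
      have := convexOn_exp.2 (Set.mem_univ (0:ℝ)) (Set.mem_univ (t * C))
        (by linarith : (0:ℝ) ≤ 1 - φ a / C) hθ0 (by ring)
      simp only [smul_eq_mul, mul_zero, zero_add] at this
      have harg : (φ a / C) * (t * C) = t * φ a := by field_simp
      rw [harg] at this
      simpa [mul_comm] using this
    have hstep : ∫ a, exp (t * φ a) ∂ν ≤ (1 - m / C) + (m / C) * exp (t * C) := by
      calc ∫ a, exp (t * φ a) ∂ν ≤ ∫ a, ((1 - φ a / C) + (φ a / C) * exp (t * C)) ∂ν := by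
            apply integral_mono_ae hintexp _ hpt
            apply Integrable.add
            · exact (integrable_const 1).sub (hφint.div_const C)
            · exact (hφint.div_const C).mul_const _
        _ = (1 - m / C) + (m / C) * exp (t * C) := by
            have e1 : Integrable (fun a => 1 - φ a / C) ν :=
              (integrable_const 1).sub (hφint.div_const C)
            have e2 : Integrable (fun a => φ a / C * rexp (t * C)) ν :=
              (hφint.div_const C).mul_const _
            rw [integral_add e1 e2, integral_sub (integrable_const 1) (hφint.div_const C),
              MeasureTheory.integral_mul_const, integral_div]
            simp [hm]
    have hkey := mcd_key (p := m / C) (div_nonneg hmean0 hC) ((div_le_one hCpos).2 hmeanC) (t * C)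
    calc ∫ a, exp (t * φ a) ∂ν ≤ 1 - m / C + (m / C) * exp (t * C) := hstep
      _ ≤ exp ((m / C) * (t * C) + (t * C) ^ 2 / 8) := hkey
      _ = exp (t * m + t ^ 2 * C ^ 2 / 8) := by
          congr 1
          field_simp

/-- Hoeffding's lemma. -/
private lemma mcd_hoeffding {φ : α → ℝ} (hφ : Measurable φ) {a₀ C t : ℝ} (hC : 0 ≤ C)
    (hb : ∀ᵐ a ∂ν, φ a ∈ Set.Icc a₀ (a₀ + C)) :
    ∫ a, exp (t * φ a) ∂ν ≤ exp (t * ∫ a, φ a ∂ν + t ^ 2 * C ^ 2 / 8) := by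
  have h0 := mcd_hoeffding0 ν (φ := fun a => φ a - a₀) (hφ.sub measurable_const) hC
    (by filter_upwards [hb] with a ha; exact ⟨by linarith [ha.1], by linarith [ha.2]⟩) (t := t)
  have hφint : Integrable φ ν := by
    refine Integrable.mono' (integrable_const (|a₀| + C)) hφ.aestronglyMeasurable ?_
    filter_upwards [hb] with a ha
    rw [Real.norm_eq_abs, abs_le]
    constructor
    · linarith [ha.1, neg_abs_le a₀]
    · linarith [ha.2, le_abs_self a₀]
  have hsub : ∫ a, (φ a - a₀) ∂ν = (∫ a, φ a ∂ν) - a₀ := by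
    rw [integral_sub hφint (integrable_const _)]; simp
  rw [hsub] at h0
  have hexp : ∀ a, exp (t * (φ a - a₀)) = exp (-(t * a₀)) * exp (t * φ a) := by
    intro a; rw [← exp_add]; ring_nf
  simp only [hexp] at h0
  rw [integral_const_mul] at h0
  have h2 : exp (t * ((∫ a, φ a ∂ν) - a₀) + t ^ 2 * C ^ 2 / 8)
      = exp (-(t * a₀)) * exp (t * (∫ a, φ a ∂ν) + t ^ 2 * C ^ 2 / 8) := by
    rw [← exp_add]; ring_nf
  rw [h2] at h0
  exact le_of_mul_le_mul_left h0 (exp_pos _) |>.trans (le_refl _)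

end Hoeffding



section MGF
variable {ι : Type*} [Fintype ι] {𝒳 : ι → Type*} [∀ i, MeasurableSpace (𝒳 i)]
  (μi : ∀ i, Measure (𝒳 i)) [∀ i, IsProbabilityMeasure (μi i)]

private lemma mcd_lmarginal_const (r : ℝ≥0∞) (s : Finset ι) (x : ∀ i, 𝒳 i) :
    (∫⋯∫⁻_s, (fun _ => r) ∂μi) x = r := by
  rw [lmarginal]
  simp

private lemma mcd_update_updateFinset {x : ∀ i, 𝒳 i} {i : ι} {a : 𝒳 i} {s : Finset ι}
    (his : i ∉ s) (y : ∀ j : s, 𝒳 j) :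
    updateFinset (update x i a) s y = update (updateFinset x s y) i a := by
  funext j
  rcases eq_or_ne j i with rfl | hj
  · have : j ∉ s := his
    simp [updateFinset, this]
  · by_cases hjs : j ∈ s <;> simp [updateFinset, hj, hjs]

private lemma mcd_mgf {g : (∀ i, 𝒳 i) → ℝ} (hg : Measurable g) {lo hi : ℝ}
    (hglo : ∀ x, lo ≤ g x) (hghi : ∀ x, g x ≤ hi)
    {c : ι → ℝ} (hc : ∀ i, 0 ≤ c i)
    {B : Set (∀ i, 𝒳 i)} (hB : MeasurableSet B)
    (hLip : ∀ x i a, update x i a ∉ B → g x ≤ g (update x i a) + c i)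
    (t : ℝ) (s : Finset ι) (x : ∀ i, 𝒳 i)
    (hNB : (∫⋯∫⁻_s, B.indicator 1 ∂μi) x = 0) :
    (∫⋯∫⁻_s, (fun z => ENNReal.ofReal (exp (t * g z))) ∂μi) x
      ≤ ENNReal.ofReal (exp (t * (lo +
          ((∫⋯∫⁻_s, (fun z => ENNReal.ofReal (g z - lo)) ∂μi) x).toReal)
          + t ^ 2 * (∑ i ∈ s, (c i) ^ 2) / 8)) := by
  have hBmeas : Measurable (B.indicator (1 : (∀ i, 𝒳 i) → ℝ≥0∞)) := measurable_one.indicator hB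
  have hGmeas : Measurable (fun z => ENNReal.ofReal (exp (t * g z))) :=
    (measurable_exp.comp (hg.const_mul t)).ennreal_ofReal
  have hAmeas : Measurable (fun z => ENNReal.ofReal (g z - lo)) :=
    (hg.sub measurable_const).ennreal_ofReal
  induction s using Finset.induction_on generalizing x with
  | empty =>
      simp only [lmarginal_empty, Finset.sum_empty]
      rw [ENNReal.toReal_ofReal (by linarith [hglo x])]
      apply le_of_eq
      congr 1
      ring
  | @insert i s his IH =>
      rw [lmarginal_insert _ hBmeas his] at hNB
      rw [lmarginal_insert _ hGmeas his, lmarginal_insert _ hAmeas his]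
      -- a.e. goodness
      have hNBs_meas : Measurable (fun a => (∫⋯∫⁻_s, B.indicator 1 ∂μi) (update x i a)) :=
        (hBmeas.lmarginal μi).comp (measurable_update x)
      have hae : ∀ᵐ a ∂μi i, (∫⋯∫⁻_s, B.indicator 1 ∂μi) (update x i a) = 0 :=
        (lintegral_eq_zero_iff hNBs_meas).1 hNB
      set Gd : Set (𝒳 i) := {a | (∫⋯∫⁻_s, B.indicator 1 ∂μi) (update x i a) = 0} with hGd
      have hGdmeas : MeasurableSet Gd := hNBs_meas (measurableSet_singleton 0)
      have hGdae : ∀ᵐ a ∂μi i, a ∈ Gd := hae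
      have hGdne : Gd.Nonempty := by
        by_contra hemp
        rw [Set.not_nonempty_iff_eq_empty] at hemp
        have h1 := hGdae
        rw [ae_iff] at h1
        have h2 : {a | ¬ a ∈ Gd} = Set.univ := by
          rw [hemp]; ext a; simp
        rw [h2, measure_univ] at h1
        exact one_ne_zero h1
      -- the conditional-mean function
      set φ : 𝒳 i → ℝ := fun a => lo +
          ((∫⋯∫⁻_s, (fun z => ENNReal.ofReal (g z - lo)) ∂μi) (update x i a)).toReal with hφ
      have hφmeas : Measurable φ :=
        measurable_const.add (((hAmeas.lmarginal μi).comp (measurable_update x)).ennreal_toReal)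
      have hAle : ∀ y, (∫⋯∫⁻_s, (fun z => ENNReal.ofReal (g z - lo)) ∂μi) y
          ≤ ENNReal.ofReal (hi - lo) := by
        intro y
        calc (∫⋯∫⁻_s, (fun z => ENNReal.ofReal (g z - lo)) ∂μi) y
            ≤ (∫⋯∫⁻_s, (fun _ => ENNReal.ofReal (hi - lo)) ∂μi) y :=
              lmarginal_mono (fun z => ENNReal.ofReal_le_ofReal (by linarith [hghi z])) y
          _ = ENNReal.ofReal (hi - lo) := mcd_lmarginal_const μi _ s y
      have hAfin : ∀ y, (∫⋯∫⁻_s, (fun z => ENNReal.ofReal (g z - lo)) ∂μi) y ≠ ∞ :=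
        fun y => ((hAle y).trans_lt ENNReal.ofReal_lt_top).ne
      have hφlo : ∀ a, lo ≤ φ a := fun a => le_add_of_nonneg_right ENNReal.toReal_nonneg
      have hφhi : ∀ a, φ a ≤ hi := by
        intro a
        have h1 := ENNReal.toReal_mono (ENNReal.ofReal_lt_top).ne (hAle (update x i a))
        rw [ENNReal.toReal_ofReal (by linarith [hghi x, hglo x])] at h1
        simp only [hφ]
        linarith
      -- Lipschitz property of φ w.r.t. good points
      have hLipφ : ∀ a a', a' ∈ Gd → φ a ≤ φ a' + c i := by
        intro a a' ha'
        have hz' : ∀ᵐ y ∂(Measure.pi fun j : s => μi j),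
            updateFinset (update x i a') s y ∉ B := by
          have h0 : (∫⁻ y, B.indicator (1 : ((j : ι) → 𝒳 j) → ℝ≥0∞) (updateFinset (update x i a') s y)
              ∂(Measure.pi fun j : s => μi j)) = 0 := ha'
          have hm1 : Measurable (fun y : ∀ j : s, 𝒳 j =>
              B.indicator (1 : ((j : ι) → 𝒳 j) → ℝ≥0∞) (updateFinset (update x i a') s y)) :=
            hBmeas.comp measurable_updateFinset
          have h1 := (lintegral_eq_zero_iff hm1).1 h0
          filter_upwards [h1] with y hy
          intro hmem
          simp only [Set.indicator_of_mem hmem, Pi.one_apply] at hy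
          exact one_ne_zero hy
        have hmono : (∫⋯∫⁻_s, (fun z => ENNReal.ofReal (g z - lo)) ∂μi) (update x i a)
            ≤ (∫⋯∫⁻_s, (fun z => ENNReal.ofReal (g z - lo)) ∂μi) (update x i a')
              + ENNReal.ofReal (c i) := by
          rw [lmarginal, lmarginal]
          have hsplit : (∫⁻ y, (ENNReal.ofReal (g (updateFinset (update x i a') s y) - lo)
                + ENNReal.ofReal (c i)) ∂(Measure.pi fun j : s => μi j))
              = (∫⁻ y, ENNReal.ofReal (g (updateFinset (update x i a') s y) - lo)
                ∂(Measure.pi fun j : s => μi j)) + ENNReal.ofReal (c i) := by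
            rw [lintegral_add_right _ measurable_const, lintegral_const, measure_univ, mul_one]
          rw [← hsplit]
          apply lintegral_mono_ae
          filter_upwards [hz'] with y hy
          have hzz : updateFinset (update x i a) s y
              = update (updateFinset (update x i a') s y) i a := by
            rw [mcd_update_updateFinset his, mcd_update_updateFinset his, update_idem]
          have hgz : g (updateFinset (update x i a) s y)
              ≤ g (updateFinset (update x i a') s y) + c i := by
            rw [hzz]
            have h2 := hLip (update (updateFinset (update x i a') s y) i a) i
              ((updateFinset (update x i a') s y) i) ?_
            · rwa [update_idem, update_eq_self] at h2
            · rwa [update_idem, update_eq_self]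
          calc ENNReal.ofReal (g (updateFinset (update x i a) s y) - lo)
              ≤ ENNReal.ofReal ((g (updateFinset (update x i a') s y) - lo) + c i) :=
                ENNReal.ofReal_le_ofReal (by linarith)
            _ = _ := ENNReal.ofReal_add (by linarith [hglo (updateFinset (update x i a') s y)])
                (hc i)
        have h3 := ENNReal.toReal_mono ?_ hmono
        · rw [ENNReal.toReal_add (hAfin _) ENNReal.ofReal_ne_top,
            ENNReal.toReal_ofReal (hc i)] at h3
          simp only [hφ]
          linarith
        · exact (ENNReal.add_ne_top).2 ⟨hAfin _, ENNReal.ofReal_ne_top⟩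
      -- a.e. bounds for Hoeffding
      set a₀ : ℝ := sInf (φ '' Gd) with ha₀
      have hbddb : BddBelow (φ '' Gd) := ⟨lo, fun b ⟨a, _, hab⟩ => hab ▸ hφlo a⟩
      have hGdimne : (φ '' Gd).Nonempty := hGdne.image φ
      have hub : ∀ᵐ a ∂μi i, φ a ∈ Set.Icc a₀ (a₀ + c i) := by
        filter_upwards [hGdae] with a ha
        constructor
        · exact csInf_le hbddb (Set.mem_image_of_mem φ ha)
        · have h4 : a₀ ≥ φ a - c i := by
            apply le_csInf hGdimne
            rintro b ⟨a', ha', rfl⟩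
            linarith [hLipφ a a' ha']
          linarith
      have hHoef := mcd_hoeffding (μi i) hφmeas (hc i) hub (t := t)
      -- mean identity
      have hφint : Integrable φ (μi i) := by
        refine Integrable.mono' (integrable_const (|lo| + |hi|)) hφmeas.aestronglyMeasurable ?_
        apply Filter.Eventually.of_forall
        intro a
        rw [Real.norm_eq_abs, abs_le]
        constructor
        · linarith [hφlo a, neg_abs_le lo, le_abs_self lo, abs_nonneg hi]
        · linarith [hφhi a, le_abs_self hi, abs_nonneg lo]
      have hψmeas : Measurable (fun a =>
          (((∫⋯∫⁻_s, (fun z => ENNReal.ofReal (g z - lo)) ∂μi) (update x i a)).toReal)) :=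
        ((hAmeas.lmarginal μi).comp (measurable_update x)).ennreal_toReal
      have hψint : Integrable (fun a =>
          (((∫⋯∫⁻_s, (fun z => ENNReal.ofReal (g z - lo)) ∂μi) (update x i a)).toReal)) (μi i) := by
        refine Integrable.mono' (integrable_const (hi - lo)) hψmeas.aestronglyMeasurable ?_
        apply Filter.Eventually.of_forall
        intro a
        rw [Real.norm_eq_abs, abs_of_nonneg ENNReal.toReal_nonneg]
        have h1 := ENNReal.toReal_mono (ENNReal.ofReal_lt_top).ne (hAle (update x i a))
        rwa [ENNReal.toReal_ofReal (by linarith [hghi x, hglo x])] at h1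
      have hmean : ∫ a, φ a ∂μi i = lo +
          (∫⁻ a, (∫⋯∫⁻_s, (fun z => ENNReal.ofReal (g z - lo)) ∂μi) (update x i a) ∂μi i).toReal := by
        rw [hφ]
        rw [integral_add (integrable_const lo) hψint, integral_const]
        simp only [Measure.real, measure_univ, ENNReal.toReal_one, smul_eq_mul, one_mul]
        congr 1
        rw [integral_toReal]
        · exact ((hAmeas.lmarginal μi).comp (measurable_update x)).aemeasurable
        · exact Filter.Eventually.of_forall (fun a => (hAfin _).lt_top)
      have hintexp : Integrable (fun a => exp (t * φ a)) (μi i) := by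
        refine Integrable.mono' (integrable_const (exp (|t| * (|lo| + |hi|)))) ?_ ?_
        · exact (measurable_exp.comp (hφmeas.const_mul t)).aestronglyMeasurable
        · apply Filter.Eventually.of_forall
          intro a
          rw [Real.norm_eq_abs, abs_of_pos (exp_pos _), exp_le_exp]
          calc t * φ a ≤ |t * φ a| := le_abs_self _
            _ = |t| * |φ a| := abs_mul _ _
            _ ≤ |t| * (|lo| + |hi|) := by
                apply mul_le_mul_of_nonneg_left _ (abs_nonneg t)
                rw [abs_le]
                constructor
                · linarith [hφlo a, neg_abs_le lo, le_abs_self lo, abs_nonneg hi]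
                · linarith [hφhi a, le_abs_self hi, abs_nonneg lo]
      set K : ℝ := t ^ 2 * (∑ j ∈ s, c j ^ 2) / 8 with hK
      calc (∫⁻ a, (∫⋯∫⁻_s, (fun z => ENNReal.ofReal (exp (t * g z))) ∂μi) (update x i a) ∂μi i)
          ≤ ∫⁻ a, ENNReal.ofReal (exp (t * φ a)) * ENNReal.ofReal (exp K) ∂μi i := by
            apply lintegral_mono_ae
            filter_upwards [hae] with a ha
            have h5 := IH (update x i a) ha
            rw [← ENNReal.ofReal_mul (exp_pos _).le, ← exp_add]
            exact h5.trans (le_of_eq (by congr 1))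
        _ = (∫⁻ a, ENNReal.ofReal (exp (t * φ a)) ∂μi i) * ENNReal.ofReal (exp K) := by
            have hexpmeas : Measurable (fun a => ENNReal.ofReal (exp (t * φ a))) :=
              (measurable_exp.comp (hφmeas.const_mul t)).ennreal_ofReal
            rw [lintegral_mul_const _ hexpmeas]
        _ ≤ ENNReal.ofReal (exp (t * (∫ a, φ a ∂μi i) + t ^ 2 * c i ^ 2 / 8))
              * ENNReal.ofReal (exp K) := by
            apply mul_le_mul_left
            rw [← ofReal_integral_eq_lintegral_ofReal hintexp
              (Filter.Eventually.of_forall (fun a => (exp_pos _).le))]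
            exact ENNReal.ofReal_le_ofReal hHoef
        _ ≤ ENNReal.ofReal (exp (t * (lo +
              (∫⁻ a, (∫⋯∫⁻_s, (fun z => ENNReal.ofReal (g z - lo)) ∂μi) (update x i a) ∂μi i).toReal)
              + t ^ 2 * (∑ j ∈ insert i s, c j ^ 2) / 8)) := by
            rw [← ENNReal.ofReal_mul (exp_pos _).le, ← exp_add]
            apply ENNReal.ofReal_le_ofReal
            apply le_of_eq
            congr 1
            rw [hmean, Finset.sum_insert his, hK]
            ring
end MGF


section OneSided
variable {ι : Type*} [Fintype ι] {𝒳 : ι → Type*} [∀ i, MeasurableSpace (𝒳 i)]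
  (μi : ∀ i, Measure (𝒳 i)) [∀ i, IsProbabilityMeasure (μi i)]

private lemma mcd_inf'_measurable {σ : Type*} (s : Finset σ) (hs : s.Nonempty)
    (F : σ → (∀ i, 𝒳 i) → ℝ) (hF : ∀ j, Measurable (F j)) :
    Measurable (fun x => s.inf' hs (fun j => F j x)) := by
  induction hs using Finset.Nonempty.cons_induction with
  | singleton j => simpa using hF j
  | cons j s hjs hsne IH =>
      have heq : (fun x => (Finset.cons j s hjs).inf' (Finset.cons_nonempty hjs) (fun k => F k x))
          = fun x => min (F j x) (s.inf' hsne (fun k => F k x)) := by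
        funext x
        rw [Finset.inf'_cons]
      rw [heq]
      exact (hF j).min IH
end OneSided

section Ext
variable {ι : Type*} [Fintype ι] {𝒳 : ι → Type*} [∀ i, MeasurableSpace (𝒳 i)]
  (μi : ∀ i, Measure (𝒳 i)) [∀ i, IsProbabilityMeasure (μi i)]

private lemma mcd_lmarginal_const' (r : ℝ≥0∞) (s : Finset ι) (x : ∀ i, 𝒳 i) :
    (∫⋯∫⁻_s, (fun _ => r) ∂μi) x = r := by
  rw [MeasureTheory.lmarginal]
  simp


private lemma mcd_extension
    {𝒴 : Set (∀ i, 𝒳 i)} (h𝒴 : MeasurableSet 𝒴)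
    {f : (∀ i, 𝒳 i) → ℝ} (hf : Measurable f)
    {c : ι → ℝ} (hc : ∀ i, 0 ≤ c i)
    (hbd : ∀ x ∈ 𝒴, ∀ y ∈ 𝒴, |f x - f y| ≤ ∑ i, if x i ≠ y i then c i else 0)
    (h𝒴pos : Measure.pi μi 𝒴 ≠ 0)
    {m : ℝ}
    (hm : m = (∫ x, 𝒴.indicator f x ∂Measure.pi μi) / ((Measure.pi μi) 𝒴).toReal) :
    ∃ g : (∀ i, 𝒳 i) → ℝ, ∃ lo : ℝ, Measurable g
      ∧ (∀ x, lo ≤ g x) ∧ (∀ x, g x ≤ lo + 2 * ∑ i, c i)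
      ∧ (∀ x ∈ 𝒴, g x = f x)
      ∧ (∀ x, g x ≤ m + ∑ i, c i)
      ∧ ∃ B : Set (∀ i, 𝒳 i), MeasurableSet B ∧ Measure.pi μi B = 0
        ∧ ∀ x i a, Function.update x i a ∉ B → g x ≤ g (Function.update x i a) + c i := by
  obtain ⟨y₀, hy₀⟩ := MeasureTheory.nonempty_of_measure_ne_zero h𝒴pos
  have hμ𝒴 : 0 < ((Measure.pi μi) 𝒴).toReal := by
    apply ENNReal.toReal_pos h𝒴pos (measure_ne_top _ _)
  set cbar : ℝ := ∑ i, c i with hcbar_def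
  have hcbar : 0 ≤ cbar := Finset.sum_nonneg (fun i _ => hc i)
  set lo : ℝ := f y₀ - cbar with hlo_def
  set hi : ℝ := f y₀ + cbar with hhi_def
  have hlohi : lo ≤ hi := by simp only [hlo_def, hhi_def]; linarith
  have hfbd : ∀ x ∈ 𝒴, lo ≤ f x ∧ f x ≤ hi := by
    intro x hx
    have h1 := hbd x hx y₀ hy₀
    have h2 : (∑ i, if x i ≠ y₀ i then c i else 0) ≤ cbar := by
      apply Finset.sum_le_sum
      intro i _
      split
      · exact le_refl _
      · exact hc i
    rw [abs_le] at h1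
    constructor
    · simp only [hlo_def]; linarith [h1.1]
    · simp only [hhi_def]; linarith [h1.2]
  -- the section-measure functions
  set Nq : ℚ → Finset ι → (∀ i, 𝒳 i) → ℝ≥0∞ :=
    fun q s => ∫⋯∫⁻_s, ((𝒴 ∩ {z | f z < (q:ℝ)}).indicator 1) ∂μi with hNq_def
  have hNset : ∀ q : ℚ, MeasurableSet (𝒴 ∩ {z | f z < (q:ℝ)}) :=
    fun q => h𝒴.inter (measurableSet_lt hf measurable_const)
  have hNind : ∀ q : ℚ, Measurable ((𝒴 ∩ {z | f z < (q:ℝ)}).indicator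
      (1 : (∀ i, 𝒳 i) → ℝ≥0∞)) := fun q => measurable_one.indicator (hNset q)
  have hNmeas : ∀ (q : ℚ) (s : Finset ι), Measurable (Nq q s) :=
    fun q s => (hNind q).lmarginal μi
  -- rational essential infima
  set H : Finset ι → (∀ i, 𝒳 i) → ℝ≥0∞ := fun s x =>
    ⨆ q : ℚ, if ((q:ℝ) ≤ hi ∧ Nq q s x = 0) then ENNReal.ofReal ((q:ℝ) - lo) else 0 with hH_def
  have hHmeas : ∀ s, Measurable (H s) := by
    intro s
    apply Measurable.iSup
    intro q
    have hset : MeasurableSet {x | (q:ℝ) ≤ hi ∧ Nq q s x = 0} := by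
      rw [Set.setOf_and]
      exact (MeasurableSet.const _).inter ((hNmeas q s) (measurableSet_singleton 0))
    exact Measurable.ite hset measurable_const measurable_const
  have hHle : ∀ s x, H s x ≤ ENNReal.ofReal (hi - lo) := by
    intro s x
    apply iSup_le
    intro q
    split_ifs with hq
    · exact ENNReal.ofReal_le_ofReal (by linarith [hq.1])
    · exact zero_le
  have hHne : ∀ s x, H s x ≠ ∞ := fun s x => ((hHle s x).trans_lt ENNReal.ofReal_lt_top).ne
  set hS : Finset ι → (∀ i, 𝒳 i) → ℝ := fun s x => lo + (H s x).toReal with hhS_def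
  have hhSmeas : ∀ s, Measurable (hS s) :=
    fun s => measurable_const.add (hHmeas s).ennreal_toReal
  have hhSlo : ∀ s x, lo ≤ hS s x := fun s x => le_add_of_nonneg_right ENNReal.toReal_nonneg
  have hhShi : ∀ s x, hS s x ≤ hi := by
    intro s x
    have h1 := ENNReal.toReal_mono (ENNReal.ofReal_lt_top).ne (hHle s x)
    rw [ENNReal.toReal_ofReal (by linarith)] at h1
    simp only [hhS_def]
    linarith
  -- K1 : hS ∅ x ≤ f x on 𝒴
  have hK1 : ∀ x ∈ 𝒴, hS ∅ x ≤ f x := by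
    intro x hx
    have h1 : H ∅ x ≤ ENNReal.ofReal (f x - lo) := by
      apply iSup_le
      intro q
      split_ifs with hq
      · have h2 : Nq q ∅ x = (𝒴 ∩ {z | f z < (q:ℝ)}).indicator 1 x := by
          simp only [hNq_def, MeasureTheory.lmarginal_empty]
        have h3 : x ∉ 𝒴 ∩ {z | f z < (q:ℝ)} := by
          intro hmem
          rw [h2, Set.indicator_of_mem hmem] at hq
          exact one_ne_zero hq.2
        have h4 : (q:ℝ) ≤ f x := by
          by_contra h5
          exact h3 ⟨hx, by simpa using lt_of_not_ge h5⟩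
        exact ENNReal.ofReal_le_ofReal (by linarith)
      · exact zero_le
    have h5 := ENNReal.toReal_mono (ENNReal.ofReal_lt_top).ne h1
    rw [ENNReal.toReal_ofReal (by linarith [(hfbd x hx).1])] at h5
    simp only [hhS_def]
    linarith
  -- K2 : f x - ∑_{j ∈ s} c j ≤ hS s x on 𝒴
  have hK2 : ∀ x ∈ 𝒴, ∀ s : Finset ι, f x - ∑ j ∈ s, c j ≤ hS s x := by
    intro x hx s
    have hcs : 0 ≤ ∑ j ∈ s, c j := Finset.sum_nonneg (fun j _ => hc j)
    set r : ℝ := f x - ∑ j ∈ s, c j with hr_def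
    have hN0 : ∀ q : ℚ, (q:ℝ) ≤ r → Nq q s x = 0 := by
      intro q hqr
      simp only [hNq_def, MeasureTheory.lmarginal]
      have hzero : ∀ y : (j : s) → 𝒳 j,
          (𝒴 ∩ {z | f z < (q:ℝ)}).indicator (1 : (∀ i, 𝒳 i) → ℝ≥0∞)
            (Function.updateFinset x s y) = 0 := by
        intro y
        apply Set.indicator_of_notMem
        rintro ⟨hz𝒴, hzlt⟩
        set z := Function.updateFinset x s y
        have hdiff : |f x - f z| ≤ ∑ j ∈ s, c j := by
          have h6 := hbd x hx z hz𝒴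
          have h7 : (∑ i, if x i ≠ z i then c i else 0) ≤ ∑ j ∈ s, c j := by
            rw [← Finset.sum_filter_add_sum_filter_not Finset.univ (· ∈ s)]
            have h8 : ∑ i ∈ Finset.univ.filter (· ∉ s), (if x i ≠ z i then c i else 0) = 0 := by
              apply Finset.sum_eq_zero
              intro i hi
              rw [Finset.mem_filter] at hi
              have : x i = z i := by
                simp only [z, Function.updateFinset_def]
                rw [dif_neg hi.2]
              simp [this]
            rw [h8, add_zero]
            calc ∑ i ∈ Finset.univ.filter (· ∈ s), (if x i ≠ z i then c i else 0)
                ≤ ∑ i ∈ Finset.univ.filter (· ∈ s), c i := by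
                  apply Finset.sum_le_sum
                  intro i _
                  split
                  · exact le_refl _
                  · exact hc i
              _ = ∑ j ∈ s, c j := by
                  apply Finset.sum_congr _ (fun _ _ => rfl)
                  ext j
                  simp
          exact h6.trans h7
        rw [abs_le] at hdiff
        have h9 : r ≤ f z := by simp only [hr_def]; linarith [hdiff.1]
        have h10 : f z < (q:ℝ) := by simpa using hzlt
        linarith
      calc (∫⁻ y, (𝒴 ∩ {z | f z < (q:ℝ)}).indicator 1 (Function.updateFinset x s y)
            ∂Measure.pi fun j : s => μi j)
          = ∫⁻ _, 0 ∂(Measure.pi fun j : s => μi j) := by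
            apply lintegral_congr
            intro y
            exact hzero y
        _ = 0 := lintegral_zero
    have hrhi : r ≤ hi := by
      have := (hfbd x hx).2
      simp only [hr_def]
      linarith
    by_contra hlt
    push_neg at hlt
    have hlor : lo ≤ hS s x := hhSlo s x
    have hrlo : lo < r := lt_of_le_of_lt hlor hlt
    obtain ⟨q, hq1, hq2⟩ := exists_rat_btwn hlt
    have hqr : (q:ℝ) ≤ r := le_of_lt hq2
    have h11 : ENNReal.ofReal ((q:ℝ) - lo) ≤ H s x := by
      have h12 : (if ((q:ℝ) ≤ hi ∧ Nq q s x = 0) then ENNReal.ofReal ((q:ℝ) - lo) else 0)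
          = ENNReal.ofReal ((q:ℝ) - lo) := if_pos ⟨le_trans hqr hrhi, hN0 q hqr⟩
      rw [← h12]
      exact le_iSup (fun q : ℚ => if ((q:ℝ) ≤ hi ∧ Nq q s x = 0)
        then ENNReal.ofReal ((q:ℝ) - lo) else 0) q
    have h13 := ENNReal.toReal_mono (hHne s x) h11
    rw [ENNReal.toReal_ofReal (by linarith [hhSlo s x])] at h13
    have : hS s x ≥ (q:ℝ) := by simp only [hhS_def]; linarith
    linarith
  -- integrability of indicator f
  have hfint : Integrable (𝒴.indicator f) (Measure.pi μi) := by
    refine Integrable.mono' (integrable_const (|lo| + |hi|))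
      ((hf.indicator h𝒴).aestronglyMeasurable) ?_
    apply Filter.Eventually.of_forall
    intro x
    rw [Real.norm_eq_abs]
    by_cases hx : x ∈ 𝒴
    · rw [Set.indicator_of_mem hx, abs_le]
      obtain ⟨h1, h2⟩ := hfbd x hx
      constructor
      · linarith [neg_abs_le lo, le_abs_self lo, abs_nonneg hi]
      · linarith [le_abs_self hi, abs_nonneg lo]
    · rw [Set.indicator_of_notMem hx]
      simp [abs_nonneg, add_nonneg (abs_nonneg lo) (abs_nonneg hi)]
  have hind_eq : ∫ x, 𝒴.indicator f x ∂Measure.pi μi = ∫ x in 𝒴, f x ∂Measure.pi μi :=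
    integral_indicator h𝒴
  have hfint𝒴 : IntegrableOn f 𝒴 (Measure.pi μi) := (integrable_indicator_iff h𝒴).1 hfint
  -- m bounds
  have hmlo : lo ≤ m := by
    have h1 : lo * ((Measure.pi μi) 𝒴).toReal ≤ ∫ x in 𝒴, f x ∂Measure.pi μi := by
      have h2 : ∫ _ in 𝒴, lo ∂Measure.pi μi = lo * ((Measure.pi μi) 𝒴).toReal := by
        rw [setIntegral_const, smul_eq_mul, mul_comm, Measure.real]
      rw [← h2]
      apply setIntegral_mono_on (integrableOn_const (measure_ne_top _ _)) hfint𝒴 h𝒴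
      intro x hx
      exact (hfbd x hx).1
    rw [hm, hind_eq, le_div_iff₀ hμ𝒴]
    linarith
  -- K3 : hS univ x ≤ m
  have hK3 : ∀ x, hS Finset.univ x ≤ m := by
    intro x
    have h1 : H Finset.univ x ≤ ENNReal.ofReal (m - lo) := by
      apply iSup_le
      intro q
      split_ifs with hq
      · -- Nq q univ x = 0 means the set is null
        have h2 : (Measure.pi μi) (𝒴 ∩ {z | f z < (q:ℝ)}) = 0 := by
          have h3 := hq.2
          simp only [hNq_def] at h3
          rw [← MeasureTheory.lintegral_eq_lmarginal_univ x] at h3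
          rwa [lintegral_indicator_one (hNset q)] at h3
        -- then q ≤ m
        have h4 : (q:ℝ) * ((Measure.pi μi) 𝒴).toReal ≤ ∫ z in 𝒴, f z ∂Measure.pi μi := by
          have h5 : ∫ _ in 𝒴, (q:ℝ) ∂Measure.pi μi = (q:ℝ) * ((Measure.pi μi) 𝒴).toReal := by
            rw [setIntegral_const, smul_eq_mul, mul_comm, Measure.real]
          rw [← h5]
          apply setIntegral_mono_ae_restrict (integrableOn_const (measure_ne_top _ _))
            hfint𝒴
          rw [Filter.EventuallyLE, ae_restrict_iff' h𝒴]
          have h6 : ∀ᵐ z ∂Measure.pi μi, z ∉ 𝒴 ∩ {z | f z < (q:ℝ)} :=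
            (ae_iff.2 (by simpa only [not_not, Set.setOf_mem_eq] using h2))
          filter_upwards [h6] with z hz hz𝒴
          by_contra h7
          exact hz ⟨hz𝒴, by simpa using lt_of_not_ge h7⟩
        have h8 : (q:ℝ) ≤ m := by
          rw [hm, hind_eq, le_div_iff₀ hμ𝒴]
          linarith
        exact ENNReal.ofReal_le_ofReal (by linarith)
      · exact zero_le
    have h9 := ENNReal.toReal_mono (ENNReal.ofReal_lt_top).ne h1
    rw [ENNReal.toReal_ofReal (by linarith)] at h9
    simp only [hhS_def]
    linarith
  -- the bad sets
  set Bad : ι → Finset ι → ℚ → Set (∀ i, 𝒳 i) := fun i s q =>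
    if i ∈ s then ∅ else {x | Nq q (insert i s) x = 0 ∧ Nq q s x ≠ 0} with hBad_def
  have hBadmeas : ∀ i s q, MeasurableSet (Bad i s q) := by
    intro i s q
    simp only [hBad_def]
    split_ifs
    · exact MeasurableSet.empty
    · rw [Set.setOf_and]
      exact ((hNmeas q (insert i s)) (measurableSet_singleton 0)).inter
        (((hNmeas q s) (measurableSet_singleton 0)).compl)
  have hBadnull : ∀ i s q, Measure.pi μi (Bad i s q) = 0 := by
    intro i s q
    simp only [hBad_def]
    split_ifs with his
    · simp
    · set E := {x | Nq q (insert i s) x = 0 ∧ Nq q s x ≠ 0} with hE_def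
      have hEmeas : MeasurableSet E := by
        rw [hE_def, Set.setOf_and]
        exact ((hNmeas q (insert i s)) (measurableSet_singleton 0)).inter
          (((hNmeas q s) (measurableSet_singleton 0)).compl)
      have hEind : Measurable (E.indicator (1 : (∀ i, 𝒳 i) → ℝ≥0∞)) :=
        measurable_one.indicator hEmeas
      have hinner : ∀ w, (∫⁻ a, E.indicator (1 : (∀ i, 𝒳 i) → ℝ≥0∞) (Function.update w i a)
          ∂μi i) = 0 := by
        intro w
        by_cases hNw : Nq q (insert i s) w = 0
        · have h1 : (∫⁻ a, Nq q s (Function.update w i a) ∂μi i) = 0 := by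
            have h2 : Nq q (insert i s) w
                = ∫⁻ a, Nq q s (Function.update w i a) ∂μi i := by
              simp only [hNq_def]
              exact MeasureTheory.lmarginal_insert _ (hNind q) his w
            rw [← h2]
            exact hNw
          have h3 := (lintegral_eq_zero_iff ((hNmeas q s).comp (measurable_update w))).1 h1
          apply (lintegral_eq_zero_iff (hEind.comp (measurable_update w))).2
          filter_upwards [h3] with a ha
          have h4 : Function.update w i a ∉ E := by
            intro hmem
            exact hmem.2 ha
          simp only [Function.comp_apply]
          rw [Set.indicator_of_notMem h4]
          rfl
        · have h5 : ∀ a, Function.update w i a ∉ E := by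
            intro a hmem
            apply hNw
            have h6 : Nq q (insert i s) (Function.update w i a) = Nq q (insert i s) w := by
              simp only [hNq_def]
              exact MeasureTheory.lmarginal_update_of_mem μi (Finset.mem_insert_self i s) _ w a
            rw [← h6]
            exact hmem.1
          have h7 : ∀ a, E.indicator (1 : (∀ i, 𝒳 i) → ℝ≥0∞) (Function.update w i a) = 0 :=
            fun a => Set.indicator_of_notMem (h5 a) _
          simp only [h7]
          exact lintegral_zero
      have h8 : Measure.pi μi E = ∫⁻ x, E.indicator 1 x ∂Measure.pi μi :=
        (lintegral_indicator_one hEmeas).symm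
      rw [h8, MeasureTheory.lintegral_eq_lmarginal_univ y₀]
      have huniv : (Finset.univ : Finset ι) = (Finset.univ.erase i) ∪ {i} := by
        ext j
        simp only [Finset.mem_union, Finset.mem_erase, Finset.mem_univ, Finset.mem_singleton]
        by_cases hj : j = i <;> simp [hj]
      rw [huniv, MeasureTheory.lmarginal_union μi _ hEind (by simp)]
      have h9 : (∫⋯∫⁻_{i}, E.indicator 1 ∂μi) = fun _ => 0 := by
        funext w
        rw [MeasureTheory.lmarginal_singleton]
        exact hinner w
      rw [h9]
      exact mcd_lmarginal_const' μi 0 _ _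
  set B : Set (∀ i, 𝒳 i) := ⋃ (i : ι), ⋃ (s : Finset ι), ⋃ (q : ℚ), Bad i s q with hB_def
  have hBmeas : MeasurableSet B :=
    MeasurableSet.iUnion (fun i => MeasurableSet.iUnion (fun s => MeasurableSet.iUnion
      (fun q => hBadmeas i s q)))
  have hBnull : Measure.pi μi B = 0 :=
    measure_iUnion_null (fun i => measure_iUnion_null (fun s => measure_iUnion_null
      (fun q => hBadnull i s q)))
  -- K4' : monotonicity of H off B
  have hK4 : ∀ x, x ∉ B → ∀ (s : Finset ι) (i : ι), i ∉ s → H (insert i s) x ≤ H s x := by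
    intro x hxB s i his
    apply iSup_le
    intro q
    split_ifs with hq
    · have hNs : Nq q s x = 0 := by
        by_contra hne
        apply hxB
        rw [hB_def]
        refine Set.mem_iUnion.2 ⟨i, Set.mem_iUnion.2 ⟨s, Set.mem_iUnion.2 ⟨q, ?_⟩⟩⟩
        simp only [hBad_def, if_neg his]
        exact ⟨hq.2, hne⟩
      have h12 : (if ((q:ℝ) ≤ hi ∧ Nq q s x = 0) then ENNReal.ofReal ((q:ℝ) - lo) else 0)
          = ENNReal.ofReal ((q:ℝ) - lo) := if_pos ⟨hq.1, hNs⟩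
      rw [← h12]
      exact le_iSup (fun q : ℚ => if ((q:ℝ) ≤ hi ∧ Nq q s x = 0)
        then ENNReal.ofReal ((q:ℝ) - lo) else 0) q
    · exact zero_le
  have hK4' : ∀ x, x ∉ B → ∀ (s : Finset ι) (i : ι), i ∉ s → hS (insert i s) x ≤ hS s x := by
    intro x hxB s i his
    have h1 := ENNReal.toReal_mono (hHne s x) (hK4 x hxB s i his)
    simp only [hhS_def]
    linarith
  -- invariance of hS s in coordinates in s
  have hSinv : ∀ (s : Finset ι) (i : ι), i ∈ s → ∀ x a,
      hS s (Function.update x i a) = hS s x := by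
    intro s i his x a
    have h1 : ∀ q : ℚ, Nq q s (Function.update x i a) = Nq q s x := by
      intro q
      simp only [hNq_def]
      exact MeasureTheory.lmarginal_update_of_mem μi his _ x a
    simp only [hhS_def, hH_def, h1]
  -- the extension g
  set g : (∀ i, 𝒳 i) → ℝ := fun x =>
    (Finset.univ : Finset (Finset ι)).inf' Finset.univ_nonempty
      (fun s => hS s x + ∑ j ∈ s, c j) with hg_def
  have hgmeas : Measurable g :=
    mcd_inf'_measurable _ _ _ (fun s => (hhSmeas s).add_const _)
  have hgle : ∀ x (s : Finset ι), g x ≤ hS s x + ∑ j ∈ s, c j :=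
    fun x s => Finset.inf'_le _ (Finset.mem_univ s)
  have hglo : ∀ x, lo ≤ g x := by
    intro x
    apply Finset.le_inf'
    intro s _
    have := Finset.sum_nonneg (fun j (_ : j ∈ s) => hc j)
    linarith [hhSlo s x]
  have hghi : ∀ x, g x ≤ lo + 2 * cbar := by
    intro x
    calc g x ≤ hS ∅ x + ∑ j ∈ (∅ : Finset ι), c j := hgle x ∅
      _ = hS ∅ x := by simp
      _ ≤ hi := hhShi ∅ x
      _ = lo + 2 * cbar := by simp only [hlo_def, hhi_def]; ring
  have hgf : ∀ x ∈ 𝒴, g x = f x := by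
    intro x hx
    apply le_antisymm
    · calc g x ≤ hS ∅ x + ∑ j ∈ (∅ : Finset ι), c j := hgle x ∅
        _ = hS ∅ x := by simp
        _ ≤ f x := hK1 x hx
    · apply Finset.le_inf'
      intro s _
      linarith [hK2 x hx s]
  have hgm : ∀ x, g x ≤ m + cbar := by
    intro x
    calc g x ≤ hS Finset.univ x + ∑ j, c j := hgle x Finset.univ
      _ ≤ m + cbar := by simp only [hcbar_def]; linarith [hK3 x]
  -- the Lipschitz property
  have hgLip : ∀ x i a, Function.update x i a ∉ B → g x ≤ g (Function.update x i a) + c i := by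
    intro x i a hxB
    obtain ⟨s, _, hmin⟩ := Finset.exists_mem_eq_inf' (Finset.univ_nonempty)
      (fun s : Finset ι => hS s (Function.update x i a) + ∑ j ∈ s, c j)
    have hgx' : g (Function.update x i a) = hS s (Function.update x i a) + ∑ j ∈ s, c j := hmin
    by_cases his : i ∈ s
    · have h1 : hS s x = hS s (Function.update x i a) := by
        have h2 := hSinv s i his x a
        rw [h2]
      calc g x ≤ hS s x + ∑ j ∈ s, c j := hgle x s
        _ = g (Function.update x i a) := by rw [h1, hgx']
        _ ≤ g (Function.update x i a) + c i := le_add_of_nonneg_right (hc i)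
    · have h3 : hS (insert i s) x = hS (insert i s) (Function.update x i a) := by
        rw [hSinv (insert i s) i (Finset.mem_insert_self i s) x a]
      calc g x ≤ hS (insert i s) x + ∑ j ∈ insert i s, c j := hgle x (insert i s)
        _ = hS (insert i s) (Function.update x i a) + (c i + ∑ j ∈ s, c j) := by
            rw [h3, Finset.sum_insert his]
        _ ≤ hS s (Function.update x i a) + (c i + ∑ j ∈ s, c j) := by
            linarith [hK4' (Function.update x i a) hxB s i his]
        _ = g (Function.update x i a) + c i := by rw [hgx']; ring
  exact ⟨g, lo, hgmeas, hglo, hghi, hgf, hgm, B, hBmeas, hBnull, hgLip⟩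

private lemma mcd_one_sided
    {𝒴 : Set (∀ i, 𝒳 i)} (h𝒴 : MeasurableSet 𝒴)
    {f : (∀ i, 𝒳 i) → ℝ} (hf : Measurable f)
    {c : ι → ℝ} (hc : ∀ i, 0 ≤ c i)
    (hbd : ∀ x ∈ 𝒴, ∀ y ∈ 𝒴, |f x - f y| ≤ ∑ i, if x i ≠ y i then c i else 0)
    (hσ : 0 < ∑ i, c i ^ 2)
    (h𝒴pos : Measure.pi μi 𝒴 ≠ 0)
    {p m ε : ℝ}
    (hp : p = 1 - ((Measure.pi μi) 𝒴).toReal)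
    (hm : m = (∫ x, 𝒴.indicator f x ∂Measure.pi μi) / ((Measure.pi μi) 𝒴).toReal)
    (hε : 0 ≤ ε) :
    Measure.pi μi {x | x ∈ 𝒴 ∧ m + ε ≤ f x}
      ≤ ENNReal.ofReal (Real.exp (-2 * max (ε - p * ∑ i, c i) 0 ^ 2 / ∑ i, c i ^ 2)) := by
  obtain ⟨g, lo, hgmeas, hglo, hghi, hgf, hgm, B, hBmeas, hBnull, hgLip⟩ :=
    mcd_extension μi h𝒴 hf hc hbd h𝒴pos hm
  set μ := Measure.pi μi with hμ_def
  set cbar : ℝ := ∑ i, c i with hcbar_def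
  set σ2 : ℝ := ∑ i, c i ^ 2 with hσ2_def
  rcases lt_or_ge (ε - p * cbar) 0 with hneg | ht
  · -- trivial case
    rw [max_eq_right (le_of_lt hneg)]
    have h1 : (-2 * (0:ℝ) ^ 2 / σ2) = 0 := by ring
    rw [h1, Real.exp_zero, ENNReal.ofReal_one]
    exact prob_le_one
  · set t : ℝ := ε - p * cbar with ht_def
    rw [max_eq_left ht]
    obtain ⟨y₀, hy₀⟩ := MeasureTheory.nonempty_of_measure_ne_zero h𝒴pos
    have hμ𝒴 : 0 < (μ 𝒴).toReal := ENNReal.toReal_pos h𝒴pos (measure_ne_top _ _)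
    have hp0 : 0 ≤ p := by
      rw [hp]
      have : (μ 𝒴).toReal ≤ 1 := by
        have h2 : μ 𝒴 ≤ 1 := prob_le_one
        calc (μ 𝒴).toReal ≤ (1 : ℝ≥0∞).toReal := ENNReal.toReal_mono one_ne_top h2
          _ = 1 := by simp
      linarith
    have hcbar0 : 0 ≤ cbar := Finset.sum_nonneg (fun i _ => hc i)
    set hi : ℝ := lo + 2 * cbar with hhi_def
    have hgint : Integrable g μ := by
      refine Integrable.mono' (integrable_const (|lo| + |hi|)) hgmeas.aestronglyMeasurable ?_
      apply Filter.Eventually.of_forall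
      intro x
      rw [Real.norm_eq_abs, abs_le]
      constructor
      · linarith [hglo x, neg_abs_le lo, le_abs_self lo, abs_nonneg hi]
      · linarith [hghi x, le_abs_self hi, abs_nonneg lo]
    set Eg : ℝ := ∫ x, g x ∂μ with hEg_def
    -- mean bound
    have hEgle : Eg ≤ m + p * cbar := by
      have hcompl : (μ 𝒴ᶜ).toReal = p := by
        rw [measure_compl h𝒴 (measure_ne_top _ _), measure_univ,
          ENNReal.toReal_sub_of_le prob_le_one one_ne_top]
        simp [hp]
      have h𝒴toReal : (μ 𝒴).toReal = 1 - p := by rw [hp]; ring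
      have hsplit : (∫ x in 𝒴, g x ∂μ) + (∫ x in 𝒴ᶜ, g x ∂μ) = Eg :=
        integral_add_compl h𝒴 hgint
      have h𝒴part : ∫ x in 𝒴, g x ∂μ = m * (1 - p) := by
        rw [setIntegral_congr_fun h𝒴 (fun x hx => hgf x hx)]
        have h3 : ∫ x in 𝒴, f x ∂μ = m * (μ 𝒴).toReal := by
          rw [hm, ← integral_indicator h𝒴]
          field_simp
        rw [h3, h𝒴toReal]
      have hcpart : ∫ x in 𝒴ᶜ, g x ∂μ ≤ (m + cbar) * p := by
        calc ∫ x in 𝒴ᶜ, g x ∂μ ≤ ∫ _ in 𝒴ᶜ, (m + cbar) ∂μ := by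
              apply setIntegral_mono_on hgint.integrableOn
                (integrableOn_const (measure_ne_top _ _)) h𝒴.compl
              intro x _
              exact hgm x
          _ = (m + cbar) * p := by rw [setIntegral_const, smul_eq_mul, mul_comm, Measure.real, hcompl]
      have := hsplit
      nlinarith [hcpart, h𝒴part]
    -- the MGF bound
    set lam : ℝ := 4 * t / σ2 with hlam_def
    have hlam0 : 0 ≤ lam := by
      apply div_nonneg _ (le_of_lt hσ)
      linarith
    have hNB : (∫⋯∫⁻_Finset.univ, B.indicator 1 ∂μi) y₀ = 0 := by
      rw [← MeasureTheory.lintegral_eq_lmarginal_univ y₀, lintegral_indicator_one hBmeas]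
      exact hBnull
    have hmgfE := mcd_mgf μi hgmeas hglo hghi hc hBmeas hgLip lam Finset.univ y₀ hNB
    rw [← MeasureTheory.lintegral_eq_lmarginal_univ y₀, ← MeasureTheory.lintegral_eq_lmarginal_univ y₀] at hmgfE
    have hsubint : Integrable (fun x => g x - lo) μ := hgint.sub (integrable_const lo)
    have hlift : (∫⁻ x, ENNReal.ofReal (g x - lo) ∂μ) = ENNReal.ofReal (∫ x, (g x - lo) ∂μ) :=
      (ofReal_integral_eq_lintegral_ofReal hsubint
        (Filter.Eventually.of_forall (fun x => by
          simp only [Pi.zero_apply]; linarith [hglo x]))).symm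
    have hmeanid : lo + ((∫⁻ x, ENNReal.ofReal (g x - lo) ∂μ)).toReal = Eg := by
      rw [hlift, ENNReal.toReal_ofReal (integral_nonneg (fun x => by
        simp only [Pi.zero_apply]; linarith [hglo x]))]
      rw [integral_sub hgint (integrable_const lo)]
      simp [hEg_def]
    rw [hmeanid] at hmgfE
    have hexpint : Integrable (fun x => Real.exp (lam * g x)) μ := by
      refine Integrable.mono' (integrable_const (Real.exp (|lam| * (|lo| + |hi|)))) ?_ ?_
      · exact (Real.measurable_exp.comp (hgmeas.const_mul lam)).aestronglyMeasurable
      · apply Filter.Eventually.of_forall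
        intro x
        rw [Real.norm_eq_abs, abs_of_pos (Real.exp_pos _), Real.exp_le_exp]
        calc lam * g x ≤ |lam * g x| := le_abs_self _
          _ = |lam| * |g x| := abs_mul _ _
          _ ≤ |lam| * (|lo| + |hi|) := by
              apply mul_le_mul_of_nonneg_left _ (abs_nonneg lam)
              rw [abs_le]
              constructor
              · linarith [hglo x, neg_abs_le lo, le_abs_self lo, abs_nonneg hi]
              · linarith [hghi x, le_abs_self hi, abs_nonneg lo]
    have hmgfR : ∫ x, Real.exp (lam * g x) ∂μ ≤ Real.exp (lam * Eg + lam ^ 2 * σ2 / 8) := by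
      have h4 : ∫ x, Real.exp (lam * g x) ∂μ
          = ((∫⁻ x, ENNReal.ofReal (Real.exp (lam * g x)) ∂μ)).toReal := by
        rw [integral_eq_lintegral_of_nonneg_ae
          (Filter.Eventually.of_forall (fun x => (Real.exp_pos _).le))
          (Real.measurable_exp.comp (hgmeas.const_mul lam)).aestronglyMeasurable]
      rw [h4]
      have h5 := ENNReal.toReal_mono (ENNReal.ofReal_ne_top) hmgfE
      rwa [ENNReal.toReal_ofReal (Real.exp_pos _).le] at h5
    -- Chernoff
    have hcher := ProbabilityTheory.measure_ge_le_exp_mul_mgf (X := g) (μ := μ) (t := lam)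
      (Eg + t) hlam0 hexpint
    have hmgf_eq : ProbabilityTheory.mgf g μ lam = ∫ x, Real.exp (lam * g x) ∂μ := rfl
    rw [hmgf_eq] at hcher
    have hexp_bound : Real.exp (-lam * (Eg + t)) * (∫ x, Real.exp (lam * g x) ∂μ)
        ≤ Real.exp (-2 * t ^ 2 / σ2) := by
      calc Real.exp (-lam * (Eg + t)) * (∫ x, Real.exp (lam * g x) ∂μ)
          ≤ Real.exp (-lam * (Eg + t)) * Real.exp (lam * Eg + lam ^ 2 * σ2 / 8) := by
            apply mul_le_mul_of_nonneg_left hmgfR (Real.exp_pos _).le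
        _ = Real.exp (-lam * t + lam ^ 2 * σ2 / 8) := by rw [← Real.exp_add]; ring_nf
        _ = Real.exp (-2 * t ^ 2 / σ2) := by
            congr 1
            rw [hlam_def]
            field_simp
            ring
    have hincl : {x | x ∈ 𝒴 ∧ m + ε ≤ f x} ⊆ {x | Eg + t ≤ g x} := by
      intro x hx
      have h6 : g x = f x := hgf x hx.1
      have h7 : m + ε ≤ f x := hx.2
      have h8 : Eg + t ≤ m + p * cbar + t := by linarith
      have h9 : m + p * cbar + t = m + ε := by rw [ht_def]; ring
      simp only [Set.mem_setOf_eq]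
      linarith
    calc μ {x | x ∈ 𝒴 ∧ m + ε ≤ f x} ≤ μ {x | Eg + t ≤ g x} := measure_mono hincl
      _ = ENNReal.ofReal ((μ {x | Eg + t ≤ g x}).toReal) :=
          (ENNReal.ofReal_toReal (measure_ne_top _ _)).symm
      _ ≤ ENNReal.ofReal (Real.exp (-2 * t ^ 2 / σ2)) :=
          ENNReal.ofReal_le_ofReal (hcher.trans hexp_bound)

end Ext


/-- Main theorem (two-sided corollary): McDiarmid-type inequality for functions with bounded
differences on a high-probability subset `𝒴`. -/
theorem mcdiarmid_high_probability_two_sided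
    {n : ℕ} {Ω : Type*} [MeasureSpace Ω] [IsProbabilityMeasure (ℙ : Measure Ω)]
    {𝒳 : Fin n → Type*} [∀ i, MeasurableSpace (𝒳 i)]
    (X : ∀ i, Ω → 𝒳 i) (hXm : ∀ i, Measurable (X i))
    (hXindep : iIndepFun X ℙ)
    (c : Fin n → ℝ) (hc : ∀ i, 0 ≤ c i)
    (𝒴 : Set (∀ i, 𝒳 i)) (h𝒴 : MeasurableSet 𝒴)
    (f : (∀ i, 𝒳 i) → ℝ) (hf : Measurable f)
    (hbd : ∀ x ∈ 𝒴, ∀ y ∈ 𝒴, |f x - f y| ≤ ∑ i, if x i ≠ y i then c i else 0)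
    (hint : Integrable (fun ω => 𝒴.indicator f (fun i => X i ω)) ℙ)
    (p m : ℝ)
    (hp : p = 1 - (ℙ {ω | (fun i => X i ω) ∈ 𝒴}).toReal)
    (hp1 : p < 1)
    (hm : m = (∫ ω, 𝒴.indicator f (fun i => X i ω)) /
        (ℙ {ω | (fun i => X i ω) ∈ 𝒴}).toReal)
    (ε : ℝ) (hε : 0 ≤ ε) :
    ℙ {ω | |f (fun i => X i ω) - m| ≥ ε}
      ≤ ENNReal.ofReal
          (2 * (p + Real.exp (-2 * max (ε - p * ∑ i, c i) 0 ^ 2 / ∑ i, c i ^ 2))) := by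
  classical
  set T : Ω → ∀ i, 𝒳 i := fun ω i => X i ω with hT_def
  have hT : Measurable T := measurable_pi_lambda _ hXm
  set μi : ∀ i, Measure (𝒳 i) := fun i => Measure.map (X i) ℙ with hμi_def
  have hμiprob : ∀ i, IsProbabilityMeasure (μi i) :=
    fun i => Measure.isProbabilityMeasure_map (hXm i).aemeasurable
  -- the law of T is the product measure
  have hmap : Measure.pi μi = Measure.map T ℙ := by
    apply Measure.pi_eq
    intro s hs
    rw [Measure.map_apply hT (MeasurableSet.univ_pi hs)]
    have hpre : T ⁻¹' (Set.pi Set.univ s) = ⋂ i ∈ Finset.univ, X i ⁻¹' s i := by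
      ext ω
      simp [Set.mem_pi, hT_def]
    rw [hpre, hXindep.measure_inter_preimage_eq_mul Finset.univ (fun i _ => hs i)]
    apply Finset.prod_congr rfl
    intro i _
    rw [hμi_def, Measure.map_apply (hXm i) (hs i)]
  set μ : Measure (∀ i, 𝒳 i) := Measure.pi μi with hμ_def
  have hμprob : IsProbabilityMeasure μ := by rw [hmap]; exact Measure.isProbabilityMeasure_map hT.aemeasurable
  -- transfer the constants
  have h𝒴set : {ω | (fun i => X i ω) ∈ 𝒴} = T ⁻¹' 𝒴 := rfl
  have h𝒴meas : ℙ {ω | (fun i => X i ω) ∈ 𝒴} = μ 𝒴 := by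
    rw [h𝒴set, hmap, Measure.map_apply hT h𝒴]
  have hpμ : p = 1 - (μ 𝒴).toReal := by rw [hp, h𝒴meas]
  have hintegral : (∫ ω, 𝒴.indicator f (fun i => X i ω)) = ∫ x, 𝒴.indicator f x ∂μ := by
    rw [hmap, integral_map hT.aemeasurable
      ((hf.indicator h𝒴).aestronglyMeasurable)]
  have hmμ : m = (∫ x, 𝒴.indicator f x ∂μ) / (μ 𝒴).toReal := by
    rw [hm, h𝒴meas, hintegral]
  have hp0 : 0 ≤ p := by
    rw [hpμ]
    have h2 : (μ 𝒴).toReal ≤ 1 := by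
      calc (μ 𝒴).toReal ≤ (1 : ℝ≥0∞).toReal := ENNReal.toReal_mono one_ne_top prob_le_one
        _ = 1 := by simp
    linarith
  -- transfer the main event
  have hevset : ℙ {ω | |f (fun i => X i ω) - m| ≥ ε} = μ {x | |f x - m| ≥ ε} := by
    have h3 : {ω | |f (fun i => X i ω) - m| ≥ ε} = T ⁻¹' {x | |f x - m| ≥ ε} := rfl
    rw [h3, hmap, Measure.map_apply hT]
    have h4 : {x : ∀ i, 𝒳 i | |f x - m| ≥ ε} = (fun x => |f x - m|) ⁻¹' (Set.Ici ε) := rfl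
    rw [h4]
    exact ((hf.sub measurable_const).abs) measurableSet_Ici
  rw [hevset]
  -- degenerate case : ∑ c i ^ 2 = 0
  rcases eq_or_lt_of_le (Finset.sum_nonneg (fun (i : Fin n) (_ : i ∈ Finset.univ) =>
      sq_nonneg (c i))) with hσ0 | hσ
  · rw [← hσ0, _root_.div_zero, Real.exp_zero]
    calc μ {x | |f x - m| ≥ ε} ≤ 1 := prob_le_one
      _ ≤ ENNReal.ofReal (2 * (p + 1)) := by
          rw [ENNReal.one_le_ofReal]
          linarith
  · -- main case
    have h𝒴pos : μ 𝒴 ≠ 0 := by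
      intro h5
      rw [h5] at hpμ
      simp at hpμ
      rw [hpμ] at hp1
      exact lt_irrefl _ hp1
    set e : ℝ := Real.exp (-2 * max (ε - p * ∑ i, c i) 0 ^ 2 / ∑ i, c i ^ 2) with he_def
    have hone := mcd_one_sided μi h𝒴 hf hc hbd hσ h𝒴pos hpμ hmμ hε
    have hmneg : -m = (∫ x, 𝒴.indicator (fun z => -f z) x ∂μ) / (μ 𝒴).toReal := by
      have h6 : (𝒴.indicator (fun z => -f z)) = fun x => -(𝒴.indicator f x) := by
        funext x
        by_cases hx : x ∈ 𝒴
        · simp [Set.indicator_of_mem hx]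
        · simp [Set.indicator_of_notMem hx]
      rw [h6, integral_neg, hmμ]
      ring
    have hbdneg : ∀ x ∈ 𝒴, ∀ y ∈ 𝒴, |(-f x) - (-f y)| ≤ ∑ i, if x i ≠ y i then c i else 0 := by
      intro x hx y hy
      have h7 := hbd x hx y hy
      calc |(-f x) - (-f y)| = |f x - f y| := by rw [abs_sub_comm]; congr 1; ring
        _ ≤ _ := h7
    have htwo := mcd_one_sided μi h𝒴 hf.neg hc hbdneg hσ h𝒴pos hpμ hmneg hε
    -- union bound
    have hsub : {x | |f x - m| ≥ ε} ⊆ 𝒴ᶜ ∪ {x | x ∈ 𝒴 ∧ m + ε ≤ f x}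
        ∪ {x | x ∈ 𝒴 ∧ -m + ε ≤ -f x} := by
      intro x hx
      simp only [Set.mem_setOf_eq] at hx
      by_cases hx𝒴 : x ∈ 𝒴
      · rcases le_abs.1 hx with h8 | h8
        · exact Or.inl (Or.inr ⟨hx𝒴, by linarith⟩)
        · exact Or.inr ⟨hx𝒴, by linarith⟩
      · exact Or.inl (Or.inl hx𝒴)
    have hcompl : μ 𝒴ᶜ = ENNReal.ofReal p := by
      have h9 : (μ 𝒴ᶜ).toReal = p := by
        rw [measure_compl h𝒴 (measure_ne_top _ _), measure_univ,
          ENNReal.toReal_sub_of_le prob_le_one one_ne_top, hpμ]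
        simp
      rw [← h9, ENNReal.ofReal_toReal (measure_ne_top _ _)]
    calc μ {x | |f x - m| ≥ ε}
        ≤ μ (𝒴ᶜ ∪ {x | x ∈ 𝒴 ∧ m + ε ≤ f x} ∪ {x | x ∈ 𝒴 ∧ -m + ε ≤ -f x}) :=
          measure_mono hsub
      _ ≤ μ (𝒴ᶜ ∪ {x | x ∈ 𝒴 ∧ m + ε ≤ f x}) + μ {x | x ∈ 𝒴 ∧ -m + ε ≤ -f x} :=
          measure_union_le _ _
      _ ≤ μ 𝒴ᶜ + μ {x | x ∈ 𝒴 ∧ m + ε ≤ f x} + μ {x | x ∈ 𝒴 ∧ -m + ε ≤ -f x} :=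
          add_le_add_left (measure_union_le _ _) _
      _ ≤ ENNReal.ofReal p + ENNReal.ofReal e + ENNReal.ofReal e := by
          apply add_le_add (add_le_add (le_of_eq hcompl) hone) htwo
      _ = ENNReal.ofReal (p + e + e) := by
          rw [← ENNReal.ofReal_add hp0 (Real.exp_pos _).le,
            ← ENNReal.ofReal_add (by positivity) (Real.exp_pos _).le]
      _ ≤ ENNReal.ofReal (2 * (p + e)) := ENNReal.ofReal_le_ofReal (by linarith)
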